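/- For $0 < H < 1$ and $t \in \mathbb{R}$, $|t|^{2H} = \frac{\Gamma(2H+1)}{\Gamma(H)\Gamma(1-H)} \int_{\mathbb{R}} \frac{1 - \cos(\lambda t)}{|\lambda|^{2H+1}}\, d\lambda$. -/

import Mathlib

open Real MeasureTheory Set Filter Topology

-- helper: integrability of x^q e^{-(b x)} on Ioi 0
lemma myIntOn {q b : ℝ} (hq : -1 < q) (hb : 0 < b) :
    IntegrableOn (fun x : ℝ => x ^ q * Real.exp (-(b * x))) (Ioi 0) := by
  have := integrableOn_rpow_mul_exp_neg_mul_rpow hq (one_pos : (0:ℝ) < 1) hb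
  refine this.congr_fun (fun x hx => ?_) measurableSet_Ioi
  beta_reduce
  rw [Real.rpow_one, neg_mul]

-- Laplace transform of 1
lemma laplace_one {s : ℝ} (hs : 0 < s) :
    ∫ x in Ioi (0:ℝ), Real.exp (-(s * x)) = 1 / s := by
  have := Real.integral_rpow_mul_exp_neg_mul_Ioi (one_pos) hs
  simp only [sub_self, Real.rpow_zero, one_mul, Real.rpow_one, Real.Gamma_one, mul_one] at this
  simpa using this

lemma integrable_exp_cos {s : ℝ} (hs : 0 < s) :
    IntegrableOn (fun x : ℝ => Real.exp (-(s * x)) * Real.cos x) (Ioi 0) := by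
  refine (exp_neg_integrableOn_Ioi 0 hs).mono' ?_ ?_
  · exact (((measurable_const.mul measurable_id').neg.exp).mul Real.measurable_cos).aestronglyMeasurable
  · filter_upwards with x
    rw [norm_mul, Real.norm_eq_abs, Real.norm_eq_abs, Real.abs_exp, neg_mul]
    exact mul_le_of_le_one_right (Real.exp_pos _).le (Real.abs_cos_le_one x)


lemma laplace_cos {s : ℝ} (hs : 0 < s) :
    ∫ x in Ioi (0:ℝ), Real.exp (-(s * x)) * Real.cos x = s / (s ^ 2 + 1) := by
  set F : ℝ → ℝ := fun x => Real.exp (-(s * x)) * (Real.sin x - s * Real.cos x) / (s ^ 2 + 1) with hF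
  have hs2 : (0:ℝ) < s ^ 2 + 1 := by positivity
  have hderiv : ∀ x ∈ Ioi (0:ℝ), HasDerivAt F (Real.exp (-(s * x)) * Real.cos x) x := by
    intro x _
    have h1 : HasDerivAt (fun x => Real.exp (-(s * x))) (-s * Real.exp (-(s * x))) x := by
      have := (Real.hasDerivAt_exp (-(s * x))).comp x (((hasDerivAt_id x).const_mul s).neg)
      exact this.congr_deriv (by ring)
    have h2 : HasDerivAt (fun x => Real.sin x - s * Real.cos x)
        (Real.cos x + s * Real.sin x) x := by
      have := (Real.hasDerivAt_sin x).sub ((Real.hasDerivAt_cos x).const_mul s)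
      exact this.congr_deriv (by ring)
    have h3 := (h1.mul h2).div_const (s ^ 2 + 1)
    exact h3.congr_deriv (by rw [div_eq_iff hs2.ne']; ring)
  have htend : Tendsto F atTop (𝓝 0) := by
    refine squeeze_zero_norm (a := fun x => (1 + s) / (s^2+1) * Real.exp (-(s * x))) ?_ ?_
    · intro x
      rw [hF]
      rw [norm_div, norm_mul, Real.norm_eq_abs, Real.norm_eq_abs, Real.norm_eq_abs, Real.abs_exp,
        abs_of_pos hs2]
      have hb : |Real.sin x - s * Real.cos x| ≤ 1 + s := by
        calc |Real.sin x - s * Real.cos x| ≤ |Real.sin x| + |s * Real.cos x| := abs_sub _ _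
          _ ≤ 1 + s := by
              refine add_le_add (Real.abs_sin_le_one x) ?_
              rw [abs_mul, abs_of_pos hs]
              exact mul_le_of_le_one_right hs.le (Real.abs_cos_le_one x)
      calc Real.exp (-(s*x)) * |Real.sin x - s * Real.cos x| / (s ^ 2 + 1)
          ≤ Real.exp (-(s*x)) * (1 + s) / (s ^ 2 + 1) := by gcongr
        _ = (1 + s) / (s^2+1) * Real.exp (-(s * x)) := by ring
    · have h1 : Tendsto (fun x : ℝ => -(s * x)) atTop atBot := by
        apply tendsto_neg_atBot_iff.mpr
        exact Tendsto.const_mul_atTop hs tendsto_id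
      have h2 : Tendsto (fun x : ℝ => Real.exp (-(s * x))) atTop (𝓝 0) :=
        Real.tendsto_exp_atBot.comp h1
      simpa using h2.const_mul ((1 + s) / (s^2+1))
  have hcont : ContinuousWithinAt F (Ici 0) 0 := by
    apply Continuous.continuousWithinAt
    fun_prop
  have := integral_Ioi_of_hasDerivAt_of_tendsto hcont hderiv (integrable_exp_cos hs) htend
  rw [this, hF]
  simp
  ring

lemma laplace_one_sub_cos {s : ℝ} (hs : 0 < s) :
    ∫ x in Ioi (0:ℝ), Real.exp (-(s * x)) * (1 - Real.cos x)
      = 1 / s - s / (s ^ 2 + 1) := by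
  have h1 : IntegrableOn (fun x : ℝ => Real.exp (-(s * x))) (Ioi 0) := by
    have := exp_neg_integrableOn_Ioi 0 hs
    simpa [neg_mul] using this
  have h2 := integrable_exp_cos hs
  have := integral_sub h1 h2
  simp only [mul_sub, mul_one]
  rw [this, laplace_one hs, laplace_cos hs]

lemma intOn_aux {a p : ℝ} (h0 : -1 < a) (hp : 0 < p) (h1 : a - p < -1) :
    IntegrableOn (fun s : ℝ => s ^ a / (s ^ p + 1)) (Ioi 0) := by
  have hmeas : Measurable (fun s : ℝ => s ^ a / (s ^ p + 1)) := by
    fun_prop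
  rw [show Ioi (0:ℝ) = Ioc 0 1 ∪ Ioi 1 by rw [Ioc_union_Ioi_eq_Ioi]; norm_num]
  apply IntegrableOn.union
  · -- on (0,1]: bound by s ^ a
    have hint : IntegrableOn (fun s : ℝ => s ^ a) (Ioc 0 1) := by
      have := intervalIntegral.intervalIntegrable_rpow' (a := 0) (b := 1) h0
      rwa [intervalIntegrable_iff_integrableOn_Ioc_of_le zero_le_one] at this
    refine hint.mono' hmeas.aestronglyMeasurable ?_
    filter_upwards [ae_restrict_mem measurableSet_Ioc] with s hsm
    have hs0 : 0 < s := hsm.1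
    rw [Real.norm_eq_abs, abs_div, abs_of_nonneg (Real.rpow_nonneg hs0.le _),
      abs_of_pos (by positivity)]
    rw [div_le_iff₀ (by positivity)]
    nlinarith [Real.rpow_nonneg hs0.le a, Real.rpow_nonneg hs0.le p]
  · -- on (1,∞): bound by s ^ (a - p)
    have hint : IntegrableOn (fun s : ℝ => s ^ (a - p)) (Ioi 1) :=
      integrableOn_Ioi_rpow_of_lt h1 one_pos
    refine hint.mono' hmeas.aestronglyMeasurable ?_
    filter_upwards [ae_restrict_mem measurableSet_Ioi] with s hsm
    have hs1 : 1 < s := hsm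
    have hs0 : 0 < s := lt_trans one_pos hs1
    rw [Real.norm_eq_abs, abs_div, abs_of_nonneg (Real.rpow_nonneg hs0.le _),
      abs_of_pos (by positivity)]
    rw [div_le_iff₀ (by positivity), Real.rpow_sub hs0, div_mul_eq_mul_div, le_div_iff₀ (by positivity)]
    have : Real.exp 0 ≤ 1 := by norm_num
    nlinarith [Real.rpow_nonneg hs0.le a, Real.rpow_pos_of_pos hs0 p]

lemma fubini1 {H : ℝ} (hH0 : 0 < H) (hH1 : H < 1) :
    Real.Gamma (2*H+1) * ∫ x in Ioi (0:ℝ), (1 - Real.cos x) / x ^ (2*H+1)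
      = ∫ s in Ioi (0:ℝ), s ^ (2*H-1) / (s ^ 2 + 1) := by
  set μ := volume.restrict (Ioi (0:ℝ)) with hμ
  set F : ℝ → ℝ → ℝ := fun x s => (1 - Real.cos x) * (s ^ (2*H) * Real.exp (-(x*s))) with hFdef
  have hmeas : AEStronglyMeasurable (Function.uncurry F) (μ.prod μ) := by
    apply Measurable.aestronglyMeasurable
    fun_prop
  -- value of the inner integral over x, for fixed s > 0
  have hinner_x : ∀ s ∈ Ioi (0:ℝ), ∫ x, F x s ∂μ = s ^ (2*H-1) / (s ^ 2 + 1) := by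
    intro s hs
    rw [hμ]
    have : ∀ x : ℝ, F x s = s ^ (2*H) * (Real.exp (-(s * x)) * (1 - Real.cos x)) := by
      intro x; rw [hFdef]; simp only; ring_nf
    simp_rw [this]
    rw [integral_const_mul, laplace_one_sub_cos hs]
    have hs0 : (0:ℝ) < s := hs
    have h1 : 1/s - s/(s^2+1) = 1/(s*(s^2+1)) := by
      field_simp
      ring
    rw [h1, Real.rpow_sub hs0]
    rw [Real.rpow_one]
    field_simp
    try ring
  -- integrability of F on the product
  have hint : Integrable (Function.uncurry F) (μ.prod μ) := by
    rw [integrable_prod_iff' hmeas]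
    constructor
    · filter_upwards [ae_restrict_mem measurableSet_Ioi] with s hs
      have hs0 : (0:ℝ) < s := hs
      have hbase : IntegrableOn (fun x : ℝ => Real.exp (-(s * x))) (Ioi 0) := by
        simpa [neg_mul] using exp_neg_integrableOn_Ioi 0 hs0
      refine (hbase.const_mul (2 * s ^ (2*H))).mono' ?_ ?_
      · apply Measurable.aestronglyMeasurable; fun_prop
      · filter_upwards [ae_restrict_mem measurableSet_Ioi] with x hx
        have hc1 : (0:ℝ) ≤ 1 - Real.cos x := by nlinarith [Real.cos_le_one x]
        have hc2 : 1 - Real.cos x ≤ 2 := by nlinarith [Real.neg_one_le_cos x]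
        rw [Real.norm_eq_abs, Function.uncurry]
        simp only
        rw [abs_mul, abs_of_nonneg hc1, abs_mul, abs_of_nonneg (Real.rpow_nonneg hs0.le _),
          Real.abs_exp, mul_comm x s]
        calc (1 - Real.cos x) * (s ^ (2*H) * Real.exp (-(s * x)))
            ≤ 2 * (s ^ (2*H) * Real.exp (-(s * x))) :=
              mul_le_mul_of_nonneg_right hc2 (by positivity)
          _ = 2 * s ^ (2*H) * Real.exp (-(s * x)) := by ring
    · -- the function s ↦ ∫ x, ‖F x s‖ is integrable
      have heq : ∀ᵐ s ∂μ, (∫ x, ‖Function.uncurry F (x, s)‖ ∂μ) = s ^ (2*H-1) / (s ^ 2 + 1) := by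
        filter_upwards [ae_restrict_mem measurableSet_Ioi] with s hs
        have hs0 : (0:ℝ) < s := hs
        have hnorm : ∀ᵐ x ∂μ, ‖Function.uncurry F (x, s)‖ = F x s := by
          filter_upwards [ae_restrict_mem measurableSet_Ioi] with x hx
          have hc1 : (0:ℝ) ≤ 1 - Real.cos x := by nlinarith [Real.cos_le_one x]
          rw [Real.norm_eq_abs, Function.uncurry]
          simp only
          rw [abs_of_nonneg (by positivity)]
        rw [integral_congr_ae hnorm, hinner_x s hs]
      refine Integrable.congr (intOn_aux (p := 2) (a := 2*H-1) (by linarith) (by norm_num) (by linarith)) ?_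
      filter_upwards [heq] with s h
      rw [show ((2:ℝ)) = ((2:ℕ):ℝ) by norm_num, Real.rpow_natCast]
      exact h.symm
  -- now apply Fubini
  have hswap := integral_integral_swap hint
  -- evaluate inner integral over s, for fixed x > 0
  have hinner_s : ∀ x ∈ Ioi (0:ℝ), ∫ s, F x s ∂μ
      = Real.Gamma (2*H+1) * ((1 - Real.cos x) / x ^ (2*H+1)) := by
    intro x hx
    have hx0 : (0:ℝ) < x := hx
    rw [hμ, hFdef]
    simp only
    rw [integral_const_mul]
    have : ∫ s in Ioi (0:ℝ), s ^ (2*H) * Real.exp (-(x*s))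
        = (1/x) ^ (2*H+1) * Real.Gamma (2*H+1) := by
      have := Real.integral_rpow_mul_exp_neg_mul_Ioi (a := 2*H+1) (by linarith) hx0
      simp only [add_sub_cancel_right] at this
      rw [← this]
    rw [this, one_div, Real.inv_rpow hx0.le, ← one_div]
    ring
  calc Real.Gamma (2*H+1) * ∫ x in Ioi (0:ℝ), (1 - Real.cos x) / x ^ (2*H+1)
      = ∫ x, (∫ s, F x s ∂μ) ∂μ := by
        rw [hμ, ← integral_const_mul]
        refine setIntegral_congr_fun measurableSet_Ioi (fun x hx => ?_)
        rw [← hinner_s x hx, hμ]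
    _ = ∫ s, (∫ x, F x s ∂μ) ∂μ := hswap
    _ = ∫ s in Ioi (0:ℝ), s ^ (2*H-1) / (s ^ 2 + 1) := by
        rw [hμ]
        refine setIntegral_congr_fun measurableSet_Ioi (fun s hs => ?_)
        rw [← hinner_x s hs, hμ]

lemma fubini2 {H : ℝ} (hH0 : 0 < H) (hH1 : H < 1) :
    ∫ u in Ioi (0:ℝ), u ^ (H-1) / (1 + u) = Real.Gamma H * Real.Gamma (1-H) := by
  set μ := volume.restrict (Ioi (0:ℝ)) with hμ
  set G : ℝ → ℝ → ℝ := fun u v => u ^ (H-1) * (Real.exp (-v) * Real.exp (-(u*v))) with hGdef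
  have hmeas : AEStronglyMeasurable (Function.uncurry G) (μ.prod μ) := by
    apply Measurable.aestronglyMeasurable
    fun_prop
  -- inner integral over u for fixed v > 0
  have hinner_u : ∀ v ∈ Ioi (0:ℝ), ∫ u, G u v ∂μ
      = Real.Gamma H * (Real.exp (-v) * v ^ (-H)) := by
    intro v hv
    have hv0 : (0:ℝ) < v := hv
    rw [hμ, hGdef]
    simp only
    have : ∀ u : ℝ, u ^ (H-1) * (Real.exp (-v) * Real.exp (-(u*v)))
        = Real.exp (-v) * (u ^ (H-1) * Real.exp (-(v*u))) := by
      intro u; rw [mul_comm u v]; ring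
    simp_rw [this]
    rw [integral_const_mul]
    have := Real.integral_rpow_mul_exp_neg_mul_Ioi (a := H) hH0 hv0
    rw [this, one_div, Real.inv_rpow hv0.le, ← Real.rpow_neg hv0.le]
    ring
  -- inner integral over v for fixed u > 0
  have hinner_v : ∀ u ∈ Ioi (0:ℝ), ∫ v, G u v ∂μ = u ^ (H-1) / (1 + u) := by
    intro u hu
    have hu0 : (0:ℝ) < u := hu
    rw [hμ, hGdef]
    simp only
    have : ∀ v : ℝ, u ^ (H-1) * (Real.exp (-v) * Real.exp (-(u*v)))
        = u ^ (H-1) * Real.exp (-((1+u) * v)) := by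
      intro v
      rw [← Real.exp_add]
      ring_nf
    simp_rw [this]
    rw [integral_const_mul, laplace_one (by linarith : (0:ℝ) < 1 + u), mul_one_div]
  -- integrability on the product
  have hint : Integrable (Function.uncurry G) (μ.prod μ) := by
    rw [integrable_prod_iff' hmeas]
    constructor
    · filter_upwards [ae_restrict_mem measurableSet_Ioi] with v hv
      have hv0 : (0:ℝ) < v := hv
      have hbase : IntegrableOn (fun u : ℝ => u ^ (H-1) * Real.exp (-(v * u))) (Ioi 0) :=
        myIntOn (by linarith) hv0
      refine (hbase.const_mul (Real.exp (-v))).mono' ?_ ?_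
      · apply Measurable.aestronglyMeasurable; fun_prop
      · filter_upwards [ae_restrict_mem measurableSet_Ioi] with u hu
        have hu0 : (0:ℝ) < u := hu
        rw [Real.norm_eq_abs, Function.uncurry]
        simp only
        rw [abs_of_nonneg (by positivity), mul_comm v u]
        exact le_of_eq (by ring)
    · have heq : ∀ᵐ v ∂μ, (∫ u, ‖Function.uncurry G (u, v)‖ ∂μ)
          = Real.Gamma H * (Real.exp (-v) * v ^ (-H)) := by
        filter_upwards [ae_restrict_mem measurableSet_Ioi] with v hv
        have hnorm : ∀ᵐ u ∂μ, ‖Function.uncurry G (u, v)‖ = G u v := by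
          filter_upwards [ae_restrict_mem measurableSet_Ioi] with u hu
          have hu0 : (0:ℝ) < u := hu
          rw [Real.norm_eq_abs, Function.uncurry]
          simp only
          rw [abs_of_nonneg (by positivity)]
        rw [integral_congr_ae hnorm, hinner_u v hv]
      have hbase : IntegrableOn (fun v : ℝ => Real.Gamma H * (v ^ ((1-H)-1) * Real.exp (-(1 * v)))) (Ioi 0) :=
        (myIntOn (by linarith) one_pos).const_mul _
      have hmid : IntegrableOn (fun v : ℝ => Real.Gamma H * (Real.exp (-v) * v ^ (-H))) (Ioi 0) := by
        refine hbase.congr_fun (fun v hv => ?_) measurableSet_Ioi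
        beta_reduce
        rw [one_mul, show (1-H)-1 = -H by ring]
        ring
      refine Integrable.congr hmid ?_
      filter_upwards [heq] with v h
      exact h.symm
  have hswap := integral_integral_swap hint
  calc ∫ u in Ioi (0:ℝ), u ^ (H-1) / (1 + u)
      = ∫ u, (∫ v, G u v ∂μ) ∂μ := by
        rw [hμ]
        refine setIntegral_congr_fun measurableSet_Ioi (fun u hu => ?_)
        rw [hinner_v u hu]
    _ = ∫ v, (∫ u, G u v ∂μ) ∂μ := hswap
    _ = Real.Gamma H * Real.Gamma (1-H) := by
        rw [hμ]
        have hcong : (∫ v in Ioi (0:ℝ), ∫ u, G u v ∂μ)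
            = ∫ v in Ioi (0:ℝ), Real.Gamma H * (v ^ ((1-H)-1) * Real.exp (-(1 * v))) := by
          refine setIntegral_congr_fun measurableSet_Ioi (fun v hv => ?_)
          rw [hinner_u v hv, one_mul, show (1-H)-1 = -H by ring]
          ring
        rw [hcong, integral_const_mul,
          Real.integral_rpow_mul_exp_neg_mul_Ioi (a := 1-H) (by linarith) one_pos]
        simp

lemma subst_sq {H : ℝ} (hH0 : 0 < H) (hH1 : H < 1) :
    ∫ s in Ioi (0:ℝ), s ^ (2*H-1) / (s ^ 2 + 1)
      = (1/2) * ∫ u in Ioi (0:ℝ), u ^ (H-1) / (1 + u) := by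
  have h2 : (2:ℝ) ≠ 0 := two_ne_zero
  have := MeasureTheory.integral_comp_rpow_Ioi
    (fun y => (1/2 : ℝ) * (y ^ (H-1) / (1 + y))) h2
  rw [← integral_const_mul]
  rw [← this]
  refine setIntegral_congr_fun measurableSet_Ioi (fun x hx => ?_)
  have hx0 : (0:ℝ) < x := hx
  simp only [smul_eq_mul]
  have e1 : |(2:ℝ)| = 2 := by norm_num
  have e2 : x ^ ((2:ℝ) - 1) = x := by
    norm_num
  have e3 : (x ^ (2:ℝ)) ^ (H-1) = x ^ (2*(H-1)) := by
    rw [← Real.rpow_mul hx0.le]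
  have e4 : x ^ (2:ℝ) = x ^ (2:ℕ) := by
    rw [show ((2:ℝ)) = ((2:ℕ):ℝ) by norm_num, Real.rpow_natCast]
  have e5 : x * x ^ (2*(H-1)) = x ^ (2*H-1) := by
    rw [show x * x ^ (2*(H-1)) = x ^ (1:ℝ) * x ^ (2*(H-1)) by rw [Real.rpow_one],
      ← Real.rpow_add hx0]
    ring_nf
  rw [e1, e2, e3, e4]
  rw [show x ^ (2*H-1) / (x ^ (2:ℕ) + 1) = x ^ (2*H-1) / (1 + x ^ (2:ℕ)) by rw [add_comm]]
  rw [← e5]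
  ring

lemma half_line_value {H : ℝ} (hH0 : 0 < H) (hH1 : H < 1) :
    ∫ x in Ioi (0:ℝ), (1 - Real.cos x) / x ^ (2*H+1)
      = Real.Gamma H * Real.Gamma (1-H) / (2 * Real.Gamma (2*H+1)) := by
  have hΓ : (0:ℝ) < Real.Gamma (2*H+1) := Real.Gamma_pos_of_pos (by linarith)
  have h1 := fubini1 hH0 hH1
  rw [subst_sq hH0 hH1, fubini2 hH0 hH1] at h1
  field_simp at h1 ⊢
  linarith

theorem stmt14 (H : ℝ) (hH0 : 0 < H) (hH1 : H < 1) (t : ℝ) :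
    |t| ^ (2 * H) = Real.Gamma (2 * H + 1) / (Real.Gamma H * Real.Gamma (1 - H)) *
      ∫ l : ℝ, (1 - Real.cos (l * t)) / |l| ^ (2 * H + 1) := by
  rcases eq_or_ne t 0 with rfl | ht
  · simp [Real.zero_rpow (by positivity : 2 * H ≠ 0)]
  have htpos : (0:ℝ) < |t| := abs_pos.mpr ht
  set g : ℝ → ℝ := fun l => (1 - Real.cos l) / |l| ^ (2*H+1) with hg
  -- step 1: pull out the scaling
  have key : ∀ l : ℝ, (1 - Real.cos (l * t)) / |l| ^ (2 * H + 1)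
      = |t| ^ (2*H+1) * g (l * t) := by
    intro l
    rcases eq_or_ne l 0 with rfl | hl
    · simp [hg]
    have hlpos : (0:ℝ) < |l| := abs_pos.mpr hl
    rw [hg]
    simp only
    rw [abs_mul, Real.mul_rpow (abs_nonneg _) (abs_nonneg _)]
    have h1 : |l| ^ (2*H+1) ≠ 0 := (Real.rpow_pos_of_pos hlpos _).ne'
    have h2 : |t| ^ (2*H+1) ≠ 0 := (Real.rpow_pos_of_pos htpos _).ne'
    field_simp
  have step1 : ∫ l : ℝ, (1 - Real.cos (l * t)) / |l| ^ (2 * H + 1)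
      = |t| ^ (2*H) * ∫ l : ℝ, g l := by
    simp_rw [key]
    rw [integral_const_mul, Measure.integral_comp_mul_right g t, smul_eq_mul, abs_inv]
    rw [← mul_assoc, ← Real.rpow_neg_one |t|, ← Real.rpow_add htpos]
    norm_num
  -- step 2: reduce to half line
  have step2 : ∫ l : ℝ, g l = 2 * ∫ x in Ioi (0:ℝ), (1 - Real.cos x) / x ^ (2*H+1) := by
    rw [← integral_comp_abs (f := fun x => (1 - Real.cos x) / x ^ (2*H+1))]
    refine integral_congr_ae (ae_of_all _ (fun l => ?_))
    rw [hg]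
    simp only [Real.cos_abs]
  rw [step1, step2, half_line_value hH0 hH1]
  have hΓ1 : (0:ℝ) < Real.Gamma (2*H+1) := Real.Gamma_pos_of_pos (by linarith)
  have hΓ2 : (0:ℝ) < Real.Gamma H := Real.Gamma_pos_of_pos hH0
  have hΓ3 : (0:ℝ) < Real.Gamma (1-H) := Real.Gamma_pos_of_pos (by linarith)
  field_simp
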